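/- arXiv:2101.02329 — 2 statements merged into one kernel-verified Lean document; each statement's English description precedes it below -/
import Mathlib

section
/- For any finite ranked poset P, rowvacuation conjugates rowmotion to its inverse: Rvac ∘ row = row^{-1} ∘ Rvac on the set of antichains of P. Consequently row and Rvac generate a dihedral group action on A(P). -/
set_option linter.unusedSectionVars false
set_option linter.unusedVariables false

open scoped Classical

variable {α : Type*}

noncomputable def toggle [PartialOrder α] (p : α) (A : Finset α) : Finset α :=
  if p ∈ A then A.erase p
  else if IsAntichain (· ≤ ·) (↑(insert p A) : Set α) then insert p A
  else A

noncomputable def rowmotion [Fintype α] [PartialOrder α] (A : Finset α) : Finset α :=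
  Finset.univ.filter
    (fun x => (∀ y ∈ A, ¬ x ≤ y) ∧ ∀ z : α, (∀ y ∈ A, ¬ z ≤ y) → z ≤ x → z = x)

noncomputable def rankToggle [Fintype α] [PartialOrder α] (rk : α → ℕ) (i : ℕ)
    (A : Finset α) : Finset α :=
  (Finset.univ.filter (fun p => rk p = i)).toList.foldr toggle A

noncomputable def rvac [Fintype α] [PartialOrder α] (rk : α → ℕ) (N : ℕ)
    (A : Finset α) : Finset α :=
  (List.range (N + 1)).foldl
    (fun B k => (List.range' k (N + 1 - k)).foldl (fun C j => rankToggle rk j C) B) A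

def IsRankFunction [PartialOrder α] (rk : α → ℕ) : Prop :=
  (∀ p : α, (∀ q : α, ¬ q < p) → rk p = 0) ∧ ∀ x y : α, x ⋖ y → rk y = rk x + 1

section RvacProof

variable [Fintype α] [PartialOrder α]

/-! ### Basic order facts -/

lemma rp_old_exists_maximal (s : Finset α) (hs : s.Nonempty) :
    ∃ m ∈ s, ∀ x ∈ s, ¬ m < x := by
  obtain ⟨m, hm, hmax⟩ := Finset.exists_maximal hs
  exact ⟨m, hm, fun x hx hlt => hlt.ne (le_antisymm hlt.le (hmax hx hlt.le))⟩

lemma rp_old_exists_minimal (s : Finset α) (hs : s.Nonempty) :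
    ∃ m ∈ s, ∀ x ∈ s, ¬ x < m := by
  obtain ⟨m, hm, hmin⟩ := Finset.exists_minimal hs
  exact ⟨m, hm, fun x hx hlt => hlt.ne (le_antisymm hlt.le (hmin hx hlt.le))⟩

lemma rp_exists_le_covBy {x y : α} (h : x < y) : ∃ c, x ≤ c ∧ c ⋖ y := by
  obtain ⟨c, hc, hmax⟩ := rp_old_exists_maximal
    (Finset.univ.filter (fun w => x ≤ w ∧ w < y)) ⟨x, by simp [h]⟩
  simp only [Finset.mem_filter, Finset.mem_univ, true_and] at hc hmax
  exact ⟨c, hc.1, hc.2, fun z hcz hzy => hmax z ⟨le_trans hc.1 hcz.le, hzy⟩ hcz⟩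

lemma rp_exists_covBy_le {x y : α} (h : x < y) : ∃ c, x ⋖ c ∧ c ≤ y := by
  obtain ⟨c, hc, hmin⟩ := rp_old_exists_minimal
    (Finset.univ.filter (fun w => x < w ∧ w ≤ y)) ⟨y, by simp [h]⟩
  simp only [Finset.mem_filter, Finset.mem_univ, true_and] at hc hmin
  exact ⟨c, ⟨hc.1, fun z hxz hzc => hmin z ⟨hxz, le_trans hzc.le hc.2⟩ hzc⟩, hc.2⟩

variable {rk : α → ℕ}

lemma rp_rk_lt (hrk : IsRankFunction rk) {x y : α} (h : x < y) : rk x < rk y := by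
  revert x
  have main : ∀ x, x < y → rk x < rk y := by
    refine WellFounded.induction (wellFounded_lt)
      (C := fun y => ∀ x, x < y → rk x < rk y) y ?_
    intro y IH x hxy
    obtain ⟨c, hxc, hcy⟩ := rp_exists_le_covBy hxy
    have hc : rk y = rk c + 1 := hrk.2 c y hcy
    rcases eq_or_lt_of_le hxc with rfl | hlt
    · omega
    · have := IH c hcy.lt x hlt
      omega
  exact fun {x} => main x

lemma rp_eq_of_le_rk (hrk : IsRankFunction rk) {x y : α} (h : x ≤ y) (hr : rk y ≤ rk x) :
    x = y := by
  rcases eq_or_lt_of_le h with rfl | hlt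
  · rfl
  · exact absurd (rp_rk_lt hrk hlt) (by omega)

lemma rp_exists_minimal_le {s : Finset α} {z : α} (hz : z ∈ s) :
    ∃ m ∈ s, m ≤ z ∧ ∀ w ∈ s, w ≤ m → w = m := by
  obtain ⟨m, hm, hmin⟩ := rp_old_exists_minimal (s.filter (· ≤ z)) ⟨z, by simp [hz]⟩
  simp only [Finset.mem_filter] at hm
  refine ⟨m, hm.1, hm.2, fun w hw hwm => ?_⟩
  by_contra hne
  exact hmin w (Finset.mem_filter.2 ⟨hw, le_trans hwm hm.2⟩) (lt_of_le_of_ne hwm hne)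

/-! ### Antichain-side: explicit description of rank toggles -/

noncomputable def Sset (rk : α → ℕ) (k : ℕ) (A : Finset α) : Finset α :=
  Finset.univ.filter (fun x => k ≤ rk x ∧ (∀ y ∈ A, k ≤ rk y → ¬ x ≤ y) ∧
    (∀ y ∈ A, rk y < k → ¬ y ≤ x))

noncomputable def minS (rk : α → ℕ) (k : ℕ) (A : Finset α) : Finset α :=
  (Sset rk k A).filter (fun x => ∀ z ∈ Sset rk k A, z ≤ x → z = x)

noncomputable def Ha (rk : α → ℕ) (k : ℕ) (A : Finset α) : Finset α :=
  A.filter (fun y => rk y < k) ∪ minS rk k A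

noncomputable def Bp (rk : α → ℕ) (k j : ℕ) (A : Finset α) : Finset α :=
  A.filter (fun y => rk y < k) ∪ (minS rk k A).filter (fun y => rk y < j) ∪
    A.filter (fun y => j ≤ rk y)

lemma mem_Sset {k : ℕ} {A : Finset α} {x : α} :
    x ∈ Sset rk k A ↔ k ≤ rk x ∧ (∀ y ∈ A, k ≤ rk y → ¬ x ≤ y) ∧
      (∀ y ∈ A, rk y < k → ¬ y ≤ x) := by
  simp [Sset]

lemma mem_minS {k : ℕ} {A : Finset α} {x : α} :
    x ∈ minS rk k A ↔ x ∈ Sset rk k A ∧ ∀ z ∈ Sset rk k A, z ≤ x → z = x := by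
  simp [minS, Finset.mem_filter]

lemma rp_not_mem_Sset_of_mem (hrk : IsRankFunction rk) {k : ℕ} {A : Finset α} {x : α}
    (hx : x ∈ A) (hkx : k ≤ rk x) : x ∉ Sset rk k A := by
  intro h
  exact (mem_Sset.1 h).2.1 x hx hkx le_rfl

lemma rp_exists_minS_le {k : ℕ} {A : Finset α} {x : α} (hx : x ∈ Sset rk k A) :
    ∃ m ∈ minS rk k A, m ≤ x := by
  obtain ⟨m, hm, hmx, hmin⟩ := rp_exists_minimal_le hx
  exact ⟨m, mem_minS.2 ⟨hm, fun z hz hzm => hmin z hz hzm⟩, hmx⟩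

lemma antichain_iff {A : Finset α} :
    IsAntichain (· ≤ ·) (↑A : Set α) ↔ ∀ x ∈ A, ∀ y ∈ A, x ≠ y → ¬ x ≤ y := by
  constructor
  · intro h x hx y hy hne
    exact h (Finset.mem_coe.2 hx) (Finset.mem_coe.2 hy) hne
  · intro h x hx y hy hne
    exact h x (Finset.mem_coe.1 hx) y (Finset.mem_coe.1 hy) hne

lemma rp_same_rank_incomp (hrk : IsRankFunction rk) {x y : α} (hxy : rk x = rk y)
    (hne : x ≠ y) : ¬ x ≤ y :=
  fun h => absurd (rp_rk_lt hrk (lt_of_le_of_ne h hne)) (by omega)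

lemma Fi_antichain (hrk : IsRankFunction rk) {A : Finset α}
    (hA : IsAntichain (· ≤ ·) (↑A : Set α)) (i : ℕ) (l : List α)
    (hl : ∀ x ∈ l, rk x = i) :
    IsAntichain (· ≤ ·) (↑(Finset.univ.filter (fun x =>
      if x ∈ l then (x ∉ A ∧ ∀ y ∈ A, rk y ≠ i → ¬ x ≤ y ∧ ¬ y ≤ x) else x ∈ A)) :
      Set α) := by
  rw [antichain_iff]
  intro a ha b hb hne hab
  simp only [Finset.mem_filter, Finset.mem_univ, true_and] at ha hb
  by_cases hal : a ∈ l <;> by_cases hbl : b ∈ l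
  · exact rp_same_rank_incomp hrk (by rw [hl a hal, hl b hbl]) hne hab
  · rw [if_pos hal] at ha
    rw [if_neg hbl] at hb
    by_cases hbi : rk b = i
    · exact rp_same_rank_incomp hrk (by rw [hl a hal, hbi]) hne hab
    · exact (ha.2 b hb hbi).1 hab
  · rw [if_neg hal] at ha
    rw [if_pos hbl] at hb
    by_cases hai : rk a = i
    · exact rp_same_rank_incomp hrk (by rw [hai, hl b hbl]) hne hab
    · exact (hb.2 a ha hai).2 hab
  · rw [if_neg hal] at ha
    rw [if_neg hbl] at hb
    exact hA (Finset.mem_coe.2 ha) (Finset.mem_coe.2 hb) hne hab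

lemma foldr_toggle_eq (hrk : IsRankFunction rk) {A : Finset α}
    (hA : IsAntichain (· ≤ ·) (↑A : Set α)) (i : ℕ) :
    ∀ l : List α, l.Nodup → (∀ x ∈ l, rk x = i) →
      l.foldr toggle A = Finset.univ.filter (fun x =>
        if x ∈ l then (x ∉ A ∧ ∀ y ∈ A, rk y ≠ i → ¬ x ≤ y ∧ ¬ y ≤ x) else x ∈ A) := by
  intro l
  induction l with
  | nil =>
    intro _ _
    simp only [List.foldr_nil, List.not_mem_nil, if_false]
    ext x
    simp
  | cons p t IH =>
    intro hnd hl
    have hpt : p ∉ t := (List.nodup_cons.1 hnd).1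
    have hndt : t.Nodup := (List.nodup_cons.1 hnd).2
    have hlt : ∀ x ∈ t, rk x = i := fun x hx => hl x (List.mem_cons_of_mem p hx)
    have hpi : rk p = i := hl p (List.mem_cons_self)
    rw [List.foldr_cons, IH hndt hlt]
    set B := Finset.univ.filter (fun x =>
      if x ∈ t then (x ∉ A ∧ ∀ y ∈ A, rk y ≠ i → ¬ x ≤ y ∧ ¬ y ≤ x) else x ∈ A) with hB
    have memB : ∀ x, x ∈ B ↔
        (if x ∈ t then (x ∉ A ∧ ∀ y ∈ A, rk y ≠ i → ¬ x ≤ y ∧ ¬ y ≤ x) else x ∈ A) := by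
      intro x; simp [hB]
    have memC : ∀ x, (x ∈ Finset.univ.filter (fun x =>
        if x ∈ p :: t then (x ∉ A ∧ ∀ y ∈ A, rk y ≠ i → ¬ x ≤ y ∧ ¬ y ≤ x) else x ∈ A)) ↔
        (if x ∈ p :: t then (x ∉ A ∧ ∀ y ∈ A, rk y ≠ i → ¬ x ≤ y ∧ ¬ y ≤ x) else x ∈ A) := by
      intro x; simp only [Finset.mem_filter, Finset.mem_univ, true_and]
    have hpB : p ∈ B ↔ p ∈ A := by rw [memB, if_neg hpt]
    by_cases hpA : p ∈ A
    · rw [toggle, if_pos (hpB.2 hpA)]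
      ext x
      rw [Finset.mem_erase, memB x, memC x]
      by_cases hxp : x = p
      · subst hxp
        rw [if_pos (List.mem_cons_self)]
        constructor
        · rintro ⟨h, _⟩
          exact absurd rfl h
        · rintro ⟨h, _⟩
          exact absurd hpA h
      · simp only [List.mem_cons, hxp, false_or, ne_eq, not_false_iff, true_and]
    · have hpnB : p ∉ B := fun h => hpA (hpB.1 h)
      have hBanti := Fi_antichain hrk hA i t hlt
      rw [← hB] at hBanti
      have hiff : IsAntichain (· ≤ ·) (↑(insert p B) : Set α) ↔
          (∀ y ∈ A, rk y ≠ i → ¬ p ≤ y ∧ ¬ y ≤ p) := by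
        constructor
        · intro h y hy hyi
          have hyB : y ∈ B := by
            rw [memB, if_neg (fun hyt => hyi (hlt y hyt))]
            exact hy
          have hyp : y ≠ p := fun he => hpA (he ▸ hy)
          rw [antichain_iff] at h
          exact ⟨h p (Finset.mem_insert_self p B) y (Finset.mem_insert_of_mem hyB)
              (Ne.symm hyp) , h y (Finset.mem_insert_of_mem hyB) p
              (Finset.mem_insert_self p B) hyp⟩
        · intro hcond
          rw [antichain_iff]
          intro a ha b hb hne hab
          rcases Finset.mem_insert.1 ha with rfl | haB
          · rcases Finset.mem_insert.1 hb with rfl | hbB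
            · exact absurd rfl hne
            · rw [memB] at hbB
              by_cases hbt : b ∈ t
              · rw [if_pos hbt] at hbB
                exact rp_same_rank_incomp hrk (by rw [hpi, hlt b hbt]) hne hab
              · rw [if_neg hbt] at hbB
                by_cases hbi : rk b = i
                · exact rp_same_rank_incomp hrk (by rw [hpi, hbi]) hne hab
                · exact (hcond b hbB hbi).1 hab
          · rcases Finset.mem_insert.1 hb with rfl | hbB
            · rw [memB] at haB
              by_cases hat : a ∈ t
              · rw [if_pos hat] at haB
                exact rp_same_rank_incomp hrk (by rw [hlt a hat, hpi]) hne hab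
              · rw [if_neg hat] at haB
                by_cases hai : rk a = i
                · exact rp_same_rank_incomp hrk (by rw [hai, hpi]) hne hab
                · exact (hcond a haB hai).2 hab
            · exact antichain_iff.1 hBanti a haB b hbB hne hab
      rw [toggle, if_neg hpnB]
      by_cases hcondp : ∀ y ∈ A, rk y ≠ i → ¬ p ≤ y ∧ ¬ y ≤ p
      · rw [if_pos (hiff.2 hcondp)]
        ext x
        rw [Finset.mem_insert, memB x, memC x]
        by_cases hxp : x = p
        · subst hxp
          rw [if_pos (List.mem_cons_self)]
          constructor
          · intro _
            exact ⟨hpA, hcondp⟩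
          · intro _
            exact Or.inl rfl
        · simp only [List.mem_cons, hxp, false_or]
      · rw [if_neg (fun h => hcondp (hiff.1 h))]
        ext x
        rw [memB x, memC x]
        by_cases hxp : x = p
        · subst hxp
          rw [if_neg hpt, if_pos (List.mem_cons_self)]
          constructor
          · intro h
            exact absurd h hpA
          · rintro ⟨_, h⟩
            exact absurd h hcondp
        · simp only [List.mem_cons, hxp, false_or]

lemma rp_not_le_of_rk_lt (hrk : IsRankFunction rk) {x y : α} (h : rk x < rk y) :
    ¬ y ≤ x := by
  intro hyx
  rcases eq_or_lt_of_le hyx with rfl | hlt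
  · omega
  · exact absurd (rp_rk_lt hrk hlt) (by omega)

lemma mem_Bp {k j : ℕ} {A : Finset α} {x : α} :
    x ∈ Bp rk k j A ↔
      (x ∈ A ∧ rk x < k) ∨ (x ∈ minS rk k A ∧ rk x < j) ∨ (x ∈ A ∧ j ≤ rk x) := by
  simp only [Bp, Finset.mem_union, Finset.mem_filter, or_assoc]

lemma mem_Ha {k : ℕ} {A : Finset α} {x : α} :
    x ∈ Ha rk k A ↔ (x ∈ A ∧ rk x < k) ∨ x ∈ minS rk k A := by
  simp only [Ha, Finset.mem_union, Finset.mem_filter]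

/-- Explicit formula for a rank toggle on an antichain. -/
lemma rankToggle_eq (hrk : IsRankFunction rk) {A : Finset α}
    (hA : IsAntichain (· ≤ ·) (↑A : Set α)) (i : ℕ) :
    rankToggle rk i A = Finset.univ.filter (fun x =>
      if rk x = i then (x ∉ A ∧ ∀ y ∈ A, rk y ≠ i → ¬ x ≤ y ∧ ¬ y ≤ x) else x ∈ A) := by
  rw [rankToggle, foldr_toggle_eq hrk hA i _ (Finset.nodup_toList _)
    (fun x hx => (Finset.mem_filter.1 (Finset.mem_toList.1 hx)).2)]
  apply Finset.filter_congr
  intro x _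
  have : x ∈ (Finset.univ.filter (fun p => rk p = i)).toList ↔ rk x = i := by
    rw [Finset.mem_toList, Finset.mem_filter]
    simp
  by_cases h : rk x = i
  · rw [if_pos (this.2 h), if_pos h]
  · rw [if_neg (fun hh => h (this.1 hh)), if_neg h]

lemma Bp_antichain (hrk : IsRankFunction rk) {A : Finset α} {k j : ℕ}
    (hA : IsAntichain (· ≤ ·) (↑A : Set α)) (hkj : k ≤ j) :
    IsAntichain (· ≤ ·) (↑(Bp rk k j A) : Set α) := by
  rw [antichain_iff]
  intro a ha b hb hne hab
  have hrklt : rk a < rk b := rp_rk_lt hrk (lt_of_le_of_ne hab hne)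
  rw [mem_Bp] at ha hb
  rcases ha with ⟨haA, hak⟩ | ⟨haS, haj⟩ | ⟨haA, haj⟩
  · rcases hb with ⟨hbA, _⟩ | ⟨hbS, _⟩ | ⟨hbA, _⟩
    · exact antichain_iff.1 hA a haA b hbA hne hab
    · exact (mem_Sset.1 (mem_minS.1 hbS).1).2.2 a haA hak hab
    · exact antichain_iff.1 hA a haA b hbA hne hab
  · have hka : k ≤ rk a := (mem_Sset.1 (mem_minS.1 haS).1).1
    rcases hb with ⟨hbA, hbk⟩ | ⟨hbS, hbj⟩ | ⟨hbA, hbj⟩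
    · omega
    · exact hne ((mem_minS.1 hbS).2 a (mem_minS.1 haS).1 hab)
    · exact (mem_Sset.1 (mem_minS.1 haS).1).2.1 b hbA (le_trans hkj hbj) hab
  · rcases hb with ⟨hbA, _⟩ | ⟨hbS, hbj⟩ | ⟨hbA, _⟩
    · exact antichain_iff.1 hA a haA b hbA hne hab
    · omega
    · exact antichain_iff.1 hA a haA b hbA hne hab

lemma Bp_start {A : Finset α} (k : ℕ) : Bp rk k k A = A := by
  ext x
  rw [mem_Bp]
  constructor
  · rintro (⟨h, _⟩ | ⟨hS, hlt⟩ | ⟨h, _⟩)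
    · exact h
    · exact absurd (mem_Sset.1 (mem_minS.1 hS).1).1 (by omega)
    · exact h
  · intro h
    by_cases hk : rk x < k
    · exact Or.inl ⟨h, hk⟩
    · exact Or.inr (Or.inr ⟨h, by omega⟩)

/-- The key step: toggling rank `j`. -/
lemma Bp_step (hrk : IsRankFunction rk) {A : Finset α} {k j : ℕ}
    (hA : IsAntichain (· ≤ ·) (↑A : Set α)) (hkj : k ≤ j) :
    rankToggle rk j (Bp rk k j A) = Bp rk k (j + 1) A := by
  rw [rankToggle_eq hrk (Bp_antichain hrk hA hkj) j]
  ext x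
  simp only [Finset.mem_filter, Finset.mem_univ, true_and]
  by_cases hxj : rk x = j
  · rw [if_pos hxj]
    constructor
    · rintro ⟨hxB, hcond⟩
      have hxA : x ∉ A := fun hxA =>
        hxB (mem_Bp.2 (Or.inr (Or.inr ⟨hxA, le_of_eq hxj.symm⟩)))
      have hxS : x ∈ Sset rk k A := by
        rw [mem_Sset]
        refine ⟨by omega, ?_, ?_⟩
        · intro y hy hky hxy
          rcases lt_trichotomy (rk y) j with h1 | h1 | h1
          · exact rp_not_le_of_rk_lt hrk (by omega) hxy
          · exact hxA ((rp_eq_of_le_rk hrk hxy (by omega)) ▸ hy)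
          · exact (hcond y (mem_Bp.2 (Or.inr (Or.inr ⟨hy, by omega⟩))) (by omega)).1 hxy
        · intro y hy hyk hyx
          exact (hcond y (mem_Bp.2 (Or.inl ⟨hy, hyk⟩)) (by omega)).2 hyx
      have hxmin : x ∈ minS rk k A := by
        rw [mem_minS]
        refine ⟨hxS, fun z hz hzx => ?_⟩
        by_contra hze
        obtain ⟨m, hm, hmz⟩ := rp_exists_minS_le hz
        have hmx : m ≤ x := le_trans hmz hzx
        have hmlt : rk m < j := by
          have h1 : rk z < rk x := rp_rk_lt hrk (lt_of_le_of_ne hzx hze)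
          have h2 : rk m ≤ rk z := by
            rcases eq_or_lt_of_le hmz with rfl | h
            · exact le_rfl
            · exact (rp_rk_lt hrk h).le
          omega
        exact (hcond m (mem_Bp.2 (Or.inr (Or.inl ⟨hm, hmlt⟩))) (by omega)).2 hmx
      exact mem_Bp.2 (Or.inr (Or.inl ⟨hxmin, by omega⟩))
    · intro hxBp
      have hxmin : x ∈ minS rk k A := by
        rcases mem_Bp.1 hxBp with ⟨_, h⟩ | ⟨h, _⟩ | ⟨_, h⟩
        · omega
        · exact h
        · omega
      have hxS := (mem_minS.1 hxmin).1
      have hxA : x ∉ A := fun h =>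
        rp_not_mem_Sset_of_mem hrk h (mem_Sset.1 hxS).1 hxS
      refine ⟨?_, ?_⟩
      · intro hxB
        rcases mem_Bp.1 hxB with ⟨h, _⟩ | ⟨_, h⟩ | ⟨h, _⟩
        · exact hxA h
        · omega
        · exact hxA h
      · intro y hyB hyne
        rcases mem_Bp.1 hyB with ⟨hyA, hyk⟩ | ⟨hyS, hyj⟩ | ⟨hyA, hyj⟩
        · refine ⟨fun hxy => ?_, (mem_Sset.1 hxS).2.2 y hyA hyk⟩
          rcases eq_or_lt_of_le hxy with rfl | hlt
          · exact hxA hyA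
          · exact absurd (rp_rk_lt hrk hlt) (by omega)
        · refine ⟨fun hxy => ?_, fun hyx => ?_⟩
          · rcases eq_or_lt_of_le hxy with heq | hlt
            · exact hyne (heq ▸ hxj)
            · exact absurd (rp_rk_lt hrk hlt) (by omega)
          · exact hyne (((mem_minS.1 hxmin).2 y (mem_minS.1 hyS).1 hyx) ▸ hxj)
        · exact ⟨(mem_Sset.1 hxS).2.1 y hyA (by omega),
            rp_not_le_of_rk_lt hrk (by omega)⟩
  · rw [if_neg hxj]
    rw [mem_Bp, mem_Bp]
    constructor
    · rintro (⟨h1, h2⟩ | ⟨h1, h2⟩ | ⟨h1, h2⟩)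
      · exact Or.inl ⟨h1, h2⟩
      · exact Or.inr (Or.inl ⟨h1, by omega⟩)
      · exact Or.inr (Or.inr ⟨h1, by omega⟩)
    · rintro (⟨h1, h2⟩ | ⟨h1, h2⟩ | ⟨h1, h2⟩)
      · exact Or.inl ⟨h1, h2⟩
      · exact Or.inr (Or.inl ⟨h1, by omega⟩)
      · exact Or.inr (Or.inr ⟨h1, by omega⟩)

lemma Bp_fold (hrk : IsRankFunction rk) {A : Finset α} (k : ℕ)
    (hA : IsAntichain (· ≤ ·) (↑A : Set α)) (m : ℕ) :
    (List.range' k m).foldl (fun C j => rankToggle rk j C) A = Bp rk k (k + m) A := by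
  induction m with
  | zero => simpa using (Bp_start (rk := rk) (A := A) k).symm
  | succ n IH =>
    have hcat : List.range' k (n + 1) = List.range' k n ++ [k + n] := by
      have := List.range'_concat (step := 1) (s := k) (n := n)
      simpa using this
    rw [hcat, List.foldl_append, List.foldl_cons, List.foldl_nil, IH,
      Bp_step hrk hA (by omega), Nat.add_assoc]

lemma Ha_eq_Bp {N : ℕ} (hN : ∀ x : α, rk x ≤ N) {A : Finset α} (k : ℕ) :
    Bp rk k (N + 1) A = Ha rk k A := by
  ext x
  rw [mem_Bp, mem_Ha]
  have := hN x
  constructor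
  · rintro (⟨h1, h2⟩ | ⟨h1, _⟩ | ⟨_, h2⟩)
    · exact Or.inl ⟨h1, h2⟩
    · exact Or.inr h1
    · omega
  · rintro (⟨h1, h2⟩ | h1)
    · exact Or.inl ⟨h1, h2⟩
    · exact Or.inr (Or.inl ⟨h1, by omega⟩)

lemma Ha_antichain (hrk : IsRankFunction rk) {A : Finset α} {k : ℕ}
    (hA : IsAntichain (· ≤ ·) (↑A : Set α)) :
    IsAntichain (· ≤ ·) (↑(Ha rk k A) : Set α) := by
  rw [antichain_iff]
  intro a ha b hb hne hab
  have hrklt : rk a < rk b := rp_rk_lt hrk (lt_of_le_of_ne hab hne)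
  rw [mem_Ha] at ha hb
  rcases ha with ⟨haA, hak⟩ | haS
  · rcases hb with ⟨hbA, _⟩ | hbS
    · exact antichain_iff.1 hA a haA b hbA hne hab
    · exact (mem_Sset.1 (mem_minS.1 hbS).1).2.2 a haA hak hab
  · rcases hb with ⟨hbA, hbk⟩ | hbS
    · have hka : k ≤ rk a := (mem_Sset.1 (mem_minS.1 haS).1).1
      omega
    · exact hne ((mem_minS.1 hbS).2 a (mem_minS.1 haS).1 hab)

lemma rowmotion_eq_Ha (A : Finset α) : rowmotion A = Ha rk 0 A := by
  ext x
  rw [mem_Ha]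
  simp only [rowmotion, Finset.mem_filter, Finset.mem_univ, true_and]
  have hS : ∀ z : α, z ∈ Sset rk 0 A ↔ ∀ y ∈ A, ¬ z ≤ y := by
    intro z
    rw [mem_Sset]
    constructor
    · exact fun h y hy => h.2.1 y hy (Nat.zero_le _)
    · exact fun h => ⟨Nat.zero_le _, fun y hy _ => h y hy, fun y _ hy0 => absurd hy0 (by omega)⟩
  constructor
  · rintro ⟨h1, h2⟩
    refine Or.inr (mem_minS.2 ⟨(hS x).2 h1, fun z hz hzx => h2 z ((hS z).1 hz) hzx⟩)
  · rintro (⟨_, h⟩ | h)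
    · omega
    · rw [mem_minS] at h
      exact ⟨(hS x).1 h.1, fun z hz hzx => h.2 z ((hS z).2 hz) hzx⟩

lemma rowmotion_antichain (A : Finset α) :
    IsAntichain (· ≤ ·) (↑(rowmotion A) : Set α) := by
  rw [antichain_iff]
  intro a ha b hb hne hab
  simp only [rowmotion, Finset.mem_filter, Finset.mem_univ, true_and] at ha hb
  exact hne (hb.2 a ha.1 hab)

/-! ### Ideal side -/

def IsIdealF (I : Finset α) : Prop := ∀ x ∈ I, ∀ y, y ≤ x → y ∈ I

noncomputable def PhiI (A : Finset α) : Finset α :=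
  Finset.univ.filter (fun x => ∀ a ∈ A, ¬ a ≤ x)

noncomputable def Tt (rk : α → ℕ) (i : ℕ) (I : Finset α) : Finset α :=
  if IsIdealF I then
    Finset.univ.filter (fun x =>
      if rk x = i then ((x ∈ I ∧ ∃ q ∈ I, x < q) ∨ (x ∉ I ∧ ∀ q, q < x → q ∈ I))
      else x ∈ I)
  else I

noncomputable def rowJ (I : Finset α) : Finset α :=
  Finset.univ.filter (fun x => ∃ q, x ≤ q ∧ q ∉ I ∧ ∀ w, w < q → w ∈ I)

noncomputable def Gk (rk : α → ℕ) (k : ℕ) (I : Finset α) : Finset α :=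
  I.filter (fun x => rk x < k) ∪ (rowJ I).filter (fun x => k ≤ rk x)

lemma mem_PhiI {A : Finset α} {x : α} : x ∈ PhiI A ↔ ∀ a ∈ A, ¬ a ≤ x := by
  simp [PhiI]

lemma PhiI_isIdeal (A : Finset α) : IsIdealF (PhiI A) := by
  intro x hx y hyx
  rw [mem_PhiI] at *
  exact fun a ha hay => hx a ha (le_trans hay hyx)

lemma mem_rowJ {I : Finset α} {x : α} :
    x ∈ rowJ I ↔ ∃ q, x ≤ q ∧ q ∉ I ∧ ∀ w, w < q → w ∈ I := by
  simp [rowJ]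

lemma mem_Gk {k : ℕ} {I : Finset α} {x : α} :
    x ∈ Gk rk k I ↔ (if rk x < k then x ∈ I else x ∈ rowJ I) := by
  by_cases h : rk x < k
  · simp only [Gk, Finset.mem_union, Finset.mem_filter, if_pos h]
    constructor
    · rintro (⟨h1, _⟩ | ⟨_, h2⟩)
      · exact h1
      · omega
    · exact fun hx => Or.inl ⟨hx, h⟩
  · simp only [Gk, Finset.mem_union, Finset.mem_filter, if_neg h]
    constructor
    · rintro (⟨_, h1⟩ | ⟨h2, _⟩)
      · omega
      · exact h2
    · exact fun hx => Or.inr ⟨hx, not_lt.1 h⟩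

lemma mem_Tt (hI : IsIdealF I) {i : ℕ} {x : α} :
    x ∈ Tt rk i I ↔ (if rk x = i then
      ((x ∈ I ∧ ∃ q ∈ I, x < q) ∨ (x ∉ I ∧ ∀ q, q < x → q ∈ I)) else x ∈ I) := by
  simp [Tt, hI]

lemma Tt_not_ideal {i : ℕ} {I : Finset α} (hI : ¬ IsIdealF I) : Tt rk i I = I := by
  simp [Tt, hI]

lemma Tt_isIdeal (hrk : IsRankFunction rk) {i : ℕ} {I : Finset α} (hI : IsIdealF I) :
    IsIdealF (Tt rk i I) := by
  intro x hx y hyx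
  rcases eq_or_lt_of_le hyx with rfl | hlt
  · exact hx
  rw [mem_Tt hI] at hx ⊢
  have hryx : rk y < rk x := rp_rk_lt hrk hlt
  by_cases hyi : rk y = i
  · rw [if_pos hyi]
    rw [if_neg (by omega)] at hx
    exact Or.inl ⟨hI x hx y hyx, ⟨x, hx, hlt⟩⟩
  · rw [if_neg hyi]
    by_cases hxi : rk x = i
    · rw [if_pos hxi] at hx
      rcases hx with ⟨hxI, _⟩ | ⟨_, hblw⟩
      · exact hI x hxI y hyx
      · exact hblw y hlt
    · rw [if_neg hxi] at hx
      exact hI x hx y hyx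

lemma rp_abv_iff_cov (hI : IsIdealF I) {x : α} :
    (∃ q ∈ I, x < q) ↔ (∃ q ∈ I, x ⋖ q) := by
  constructor
  · rintro ⟨q, hqI, hxq⟩
    obtain ⟨m, hm, hmin⟩ := rp_old_exists_minimal (I.filter (fun w => x < w))
      ⟨q, Finset.mem_filter.2 ⟨hqI, hxq⟩⟩
    simp only [Finset.mem_filter] at hm
    refine ⟨m, hm.1, hm.2, fun z hxz hzm => ?_⟩
    exact hmin z (Finset.mem_filter.2 ⟨hI m hm.1 z hzm.le, hxz⟩) hzm
  · rintro ⟨q, hqI, hc⟩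
    exact ⟨q, hqI, hc.lt⟩

lemma rp_blw_iff_cov (hI : IsIdealF I) {x : α} :
    (∀ q, q < x → q ∈ I) ↔ (∀ q, q ⋖ x → q ∈ I) := by
  constructor
  · exact fun h q hq => h q hq.lt
  · intro h q hq
    obtain ⟨c, hqc, hc⟩ := rp_exists_le_covBy hq
    exact hI c (h c hc) q hqc

lemma Tt_mem_rank_ne (hrk : IsRankFunction rk) {i : ℕ} {I : Finset α} (hI : IsIdealF I)
    {x : α} (h : rk x ≠ i) : x ∈ Tt rk i I ↔ x ∈ I := by
  rw [mem_Tt hI, if_neg h]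

lemma rp_abv_stable (hrk : IsRankFunction rk) {j : ℕ} {I : Finset α} (hI : IsIdealF I)
    {x : α} (h : j ≠ rk x + 1) : (∃ q ∈ Tt rk j I, x < q) ↔ (∃ q ∈ I, x < q) := by
  have hJ := Tt_isIdeal hrk (i := j) hI
  rw [rp_abv_iff_cov hJ, rp_abv_iff_cov hI]
  constructor
  · rintro ⟨q, hqJ, hc⟩
    refine ⟨q, ?_, hc⟩
    rwa [Tt_mem_rank_ne hrk hI (by rw [hrk.2 x q hc]; omega)] at hqJ
  · rintro ⟨q, hqI, hc⟩
    refine ⟨q, ?_, hc⟩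
    rwa [Tt_mem_rank_ne hrk hI (by rw [hrk.2 x q hc]; omega)]

lemma rp_blw_stable (hrk : IsRankFunction rk) {j : ℕ} {I : Finset α} (hI : IsIdealF I)
    {x : α} (h : j + 1 ≠ rk x) : (∀ q, q < x → q ∈ Tt rk j I) ↔ (∀ q, q < x → q ∈ I) := by
  have hJ := Tt_isIdeal hrk (i := j) hI
  rw [rp_blw_iff_cov hJ, rp_blw_iff_cov hI]
  have hrq : ∀ q : α, q ⋖ x → rk q ≠ j := by
    intro q hq
    have := hrk.2 q x hq
    omega
  constructor
  · intro hh q hq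
    rw [← Tt_mem_rank_ne hrk hI (hrq q hq)]
    exact hh q hq
  · intro hh q hq
    rw [Tt_mem_rank_ne hrk hI (hrq q hq)]
    exact hh q hq

lemma Tt_invol (hrk : IsRankFunction rk) (i : ℕ) (I : Finset α) :
    Tt rk i (Tt rk i I) = I := by
  by_cases hI : IsIdealF I
  · have hJ := Tt_isIdeal hrk (i := i) hI
    ext x
    rw [mem_Tt hJ]
    by_cases hxi : rk x = i
    · rw [if_pos hxi]
      have habv : (∃ q ∈ Tt rk i I, x < q) ↔ (∃ q ∈ I, x < q) :=
        rp_abv_stable hrk hI (by omega)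
      have hblw : (∀ q, q < x → q ∈ Tt rk i I) ↔ (∀ q, q < x → q ∈ I) :=
        rp_blw_stable hrk hI (by omega)
      have hmem := mem_Tt (rk := rk) (i := i) hI (x := x)
      rw [if_pos hxi] at hmem
      constructor
      · rintro (⟨hxJ, habv'⟩ | ⟨hxJ, hblw'⟩)
        · rcases hmem.1 hxJ with ⟨hxI, _⟩ | ⟨hxI, _⟩
          · exact hxI
          · obtain ⟨q, hqI, hxq⟩ := habv.1 habv'
            exact absurd (hI q hqI x hxq.le) hxI
        · by_contra hxI
          exact hxJ (hmem.2 (Or.inr ⟨hxI, hblw.1 hblw'⟩))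
      · intro hxI
        by_cases habvI : ∃ q ∈ I, x < q
        · exact Or.inl ⟨hmem.2 (Or.inl ⟨hxI, habvI⟩), habv.2 habvI⟩
        · have hxJ : x ∉ Tt rk i I := by
            intro h
            rcases hmem.1 h with ⟨_, h2⟩ | ⟨h1, _⟩
            · exact habvI h2
            · exact h1 hxI
          exact Or.inr ⟨hxJ, hblw.2 (fun q hq => hI x hxI q hq.le)⟩
    · rw [if_neg hxi, Tt_mem_rank_ne hrk hI hxi]
  · rw [Tt_not_ideal hI, Tt_not_ideal hI]

lemma Tt_comm (hrk : IsRankFunction rk) {i j : ℕ} (hij : i + 2 ≤ j ∨ j + 2 ≤ i)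
    (I : Finset α) : Tt rk i (Tt rk j I) = Tt rk j (Tt rk i I) := by
  by_cases hI : IsIdealF I
  · have hfar : ∀ a b : ℕ, a + 2 ≤ b ∨ b + 2 ≤ a → ∀ x : α, rk x = a →
        (x ∈ Tt rk a (Tt rk b I) ↔
          ((x ∈ I ∧ ∃ q ∈ I, x < q) ∨ (x ∉ I ∧ ∀ q, q < x → q ∈ I))) := by
      intro a b hab x hxa
      rw [mem_Tt (Tt_isIdeal hrk hI), if_pos hxa,
        Tt_mem_rank_ne hrk hI (by omega), rp_abv_stable hrk hI (by omega),
        rp_blw_stable hrk hI (by omega)]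
    have hTi := Tt_isIdeal hrk (i := i) hI
    have hTj := Tt_isIdeal hrk (i := j) hI
    ext x
    by_cases hxi : rk x = i
    · rw [hfar i j hij x hxi, Tt_mem_rank_ne hrk hTi (by omega),
        mem_Tt hI, if_pos hxi]
    · by_cases hxj : rk x = j
      · rw [hfar j i (by omega) x hxj, Tt_mem_rank_ne hrk hTj (by omega),
          mem_Tt hI, if_pos hxj]
      · rw [Tt_mem_rank_ne hrk hTj hxi, Tt_mem_rank_ne hrk hI hxj,
          Tt_mem_rank_ne hrk hTi hxj, Tt_mem_rank_ne hrk hI hxi]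
  · simp only [Tt_not_ideal hI]

lemma Gk_isIdeal (hrk : IsRankFunction rk) {k : ℕ} {I : Finset α} (hI : IsIdealF I) :
    IsIdealF (Gk rk k I) := by
  intro x hx y hyx
  rcases eq_or_lt_of_le hyx with rfl | hlt
  · exact hx
  have hr : rk y < rk x := rp_rk_lt hrk hlt
  rw [mem_Gk] at hx ⊢
  by_cases hyk : rk y < k
  · rw [if_pos hyk]
    by_cases hxk : rk x < k
    · rw [if_pos hxk] at hx
      exact hI x hx y hyx
    · rw [if_neg hxk] at hx
      obtain ⟨q, hxq, hqI, hq⟩ := mem_rowJ.1 hx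
      exact hq y (lt_of_lt_of_le hlt hxq)
  · rw [if_neg hyk, if_neg (by omega)] at *
    obtain ⟨q, hxq, hqI, hq⟩ := mem_rowJ.1 hx
    exact mem_rowJ.2 ⟨q, le_trans hyx hxq, hqI, hq⟩

lemma Gk_top {N : ℕ} (hN : ∀ x : α, rk x ≤ N) {I : Finset α} (hI : IsIdealF I) :
    Gk rk (N + 1) I = I := by
  ext x
  rw [mem_Gk, if_pos (by have := hN x; omega)]

lemma Gk_step (hrk : IsRankFunction rk) {k : ℕ} {I : Finset α} (hI : IsIdealF I) :
    Tt rk k (Gk rk (k + 1) I) = Gk rk k I := by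
  have hC : IsIdealF (Gk rk (k + 1) I) := Gk_isIdeal hrk hI
  ext x
  rw [mem_Tt hC, mem_Gk (rk := rk) (k := k) (I := I) (x := x)]
  by_cases hxk : rk x = k
  · rw [if_pos hxk, if_neg (by omega)]
    have hmemC : x ∈ Gk rk (k + 1) I ↔ x ∈ I := by
      rw [mem_Gk, if_pos (by omega)]
    have hblwC : ∀ q : α, q < x → (q ∈ Gk rk (k + 1) I ↔ q ∈ I) := by
      intro q hq
      rw [mem_Gk, if_pos (by have := rp_rk_lt hrk hq; omega)]
    constructor
    · rintro (⟨hxC, q, hqC, hxq⟩ | ⟨hxC, hblw⟩)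
      · have hq : q ∈ rowJ I := by
          have hrq : ¬ rk q < k + 1 := by have := rp_rk_lt hrk hxq; omega
          have := mem_Gk.1 hqC
          rwa [if_neg hrq] at this
        obtain ⟨q0, hqq0, hq0I, hq0⟩ := mem_rowJ.1 hq
        exact mem_rowJ.2 ⟨q0, le_trans hxq.le hqq0, hq0I, hq0⟩
      · exact mem_rowJ.2 ⟨x, le_rfl, fun h => hxC (hmemC.2 h),
          fun w hw => (hblwC w hw).1 (hblw w hw)⟩
    · intro hx
      obtain ⟨q0, hxq0, hq0I, hq0⟩ := mem_rowJ.1 hx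
      by_cases hxI : x ∈ I
      · have hxq : x < q0 := lt_of_le_of_ne hxq0 (fun h => hq0I (h ▸ hxI))
        refine Or.inl ⟨hmemC.2 hxI, q0, ?_, hxq⟩
        rw [mem_Gk, if_neg (by have := rp_rk_lt hrk hxq; omega)]
        exact mem_rowJ.2 ⟨q0, le_rfl, hq0I, hq0⟩
      · have hq0x : q0 = x := by
          by_contra hne
          exact hxI (hq0 x (lt_of_le_of_ne hxq0 (fun h => hne h.symm)))
        exact Or.inr ⟨fun h => hxI (hmemC.1 h),
          fun q hq => (hblwC q hq).2 (hq0 q (hq0x ▸ hq))⟩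
  · rw [if_neg hxk]
    by_cases h2 : rk x < k
    · rw [mem_Gk, if_pos (by omega), if_pos h2]
    · rw [mem_Gk, if_neg (by omega), if_neg h2]

/-! ### words of toggles -/

noncomputable def sigT (rk : α → ℕ) (N k : ℕ) (I : Finset α) : Finset α :=
  (List.range' k (N + 1 - k)).foldr (Tt rk) I

noncomputable def sigB (rk : α → ℕ) (N k : ℕ) (I : Finset α) : Finset α :=
  (List.range' k (N + 1 - k)).foldl (fun C j => Tt rk j C) I

noncomputable def epsT (rk : α → ℕ) (N k : ℕ) (I : Finset α) : Finset α :=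
  (List.range' k (N + 1 - k)).foldl (fun C m => sigT rk N m C) I

lemma sigT_top {N : ℕ} (I : Finset α) : sigT rk N (N + 1) I = I := by
  simp [sigT]

lemma sigB_top {N : ℕ} (I : Finset α) : sigB rk N (N + 1) I = I := by
  simp [sigB]

lemma epsT_top {N : ℕ} (I : Finset α) : epsT rk N (N + 1) I = I := by
  simp [epsT]

lemma sigT_unfold {N k : ℕ} (hk : k ≤ N) (I : Finset α) :
    sigT rk N k I = Tt rk k (sigT rk N (k + 1) I) := by
  have h1 : N + 1 - k = (N - k) + 1 := by omega
  have h2 : N + 1 - (k + 1) = N - k := by omega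
  rw [sigT, sigT, h1, h2, List.range'_succ, List.foldr_cons]

lemma epsT_unfold {N k : ℕ} (hk : k ≤ N) (I : Finset α) :
    epsT rk N k I = epsT rk N (k + 1) (sigT rk N k I) := by
  have h1 : N + 1 - k = (N - k) + 1 := by omega
  have h2 : N + 1 - (k + 1) = N - k := by omega
  rw [epsT, epsT, h1, h2, List.range'_succ, List.foldl_cons]

lemma foldr_foldl_inv (hrk : IsRankFunction rk) :
    ∀ l : List ℕ, ∀ I : Finset α,
      l.foldr (Tt rk) (l.foldl (fun C j => Tt rk j C) I) = I := by
  intro l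
  induction l with
  | nil => intro I; rfl
  | cons a t IH =>
    intro I
    rw [List.foldl_cons, List.foldr_cons, IH, Tt_invol hrk]

lemma foldl_foldr_inv (hrk : IsRankFunction rk) :
    ∀ l : List ℕ, ∀ I : Finset α,
      l.foldl (fun C j => Tt rk j C) (l.foldr (Tt rk) I) = I := by
  intro l
  induction l with
  | nil => intro I; rfl
  | cons a t IH =>
    intro I
    rw [List.foldr_cons, List.foldl_cons, Tt_invol hrk, IH]

lemma sigT_sigB (hrk : IsRankFunction rk) {N k : ℕ} (I : Finset α) :
    sigT rk N k (sigB rk N k I) = I :=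
  foldr_foldl_inv hrk _ I

lemma sigB_sigT (hrk : IsRankFunction rk) {N k : ℕ} (I : Finset α) :
    sigB rk N k (sigT rk N k I) = I :=
  foldl_foldr_inv hrk _ I

lemma Tt_comm_sigT (hrk : IsRankFunction rk) {N k m : ℕ} (h : k + 2 ≤ m) (I : Finset α) :
    Tt rk k (sigT rk N m I) = sigT rk N m (Tt rk k I) := by
  have H : ∀ l : List ℕ, (∀ j ∈ l, k + 2 ≤ j) → ∀ I : Finset α,
      Tt rk k (l.foldr (Tt rk) I) = l.foldr (Tt rk) (Tt rk k I) := by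
    intro l
    induction l with
    | nil => intro _ I; rfl
    | cons a t IH =>
      intro hl I
      rw [List.foldr_cons, List.foldr_cons,
        Tt_comm hrk (Or.inl (hl a (List.mem_cons_self))),
        IH (fun j hj => hl j (List.mem_cons_of_mem a hj))]
  apply H
  intro j hj
  have := (List.mem_range'_1.1 hj).1
  omega

lemma Tt_comm_epsT (hrk : IsRankFunction rk) {N k m : ℕ} (h : k + 2 ≤ m) (I : Finset α) :
    Tt rk k (epsT rk N m I) = epsT rk N m (Tt rk k I) := by
  have H : ∀ l : List ℕ, (∀ j ∈ l, k + 2 ≤ j) → ∀ I : Finset α,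
      Tt rk k (l.foldl (fun C m => sigT rk N m C) I) =
        l.foldl (fun C m => sigT rk N m C) (Tt rk k I) := by
    intro l
    induction l with
    | nil => intro _ I; rfl
    | cons a t IH =>
      intro hl I
      rw [List.foldl_cons, List.foldl_cons,
        IH (fun j hj => hl j (List.mem_cons_of_mem a hj)),
        Tt_comm_sigT hrk (hl a (List.mem_cons_self))]
  apply H
  intro j hj
  have := (List.mem_range'_1.1 hj).1
  omega

lemma key_lemma (hrk : IsRankFunction rk) {N k : ℕ} (hk : k ≤ N) (J : Finset α) :
    epsT rk N (k + 1) (sigB rk N (k + 1) (Tt rk k (sigT rk N (k + 1) J))) =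
      Tt rk k (epsT rk N (k + 1) J) := by
  by_cases hkN : k = N
  · subst hkN
    simp only [epsT_top, sigT_top, sigB_top]
  · have hk1 : k + 1 ≤ N := by omega
    rw [epsT_unfold hk1, sigT_sigB hrk, ← Tt_comm_epsT hrk (le_refl (k + 2)),
      ← epsT_unfold hk1]

lemma main_alg (hrk : IsRankFunction rk) {N : ℕ} :
    ∀ d k, k + d = N + 1 → ∀ I : Finset α,
      sigT rk N k (epsT rk N k I) = epsT rk N k (sigB rk N k I) := by
  intro d
  induction d with
  | zero =>
    intro k hk I
    have hkn : k = N + 1 := by omega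
    subst hkn
    simp only [sigT_top, epsT_top, sigB_top]
  | succ n IH =>
    intro k hk I
    have hkN : k ≤ N := by omega
    rw [epsT_unfold hkN, sigT_unfold hkN, IH (k + 1) (by omega),
      sigT_unfold hkN I, key_lemma hrk hkN, Tt_invol hrk,
      epsT_unfold hkN, sigT_sigB hrk]

/-! ### Transfer -/

lemma rp_rk_le_of_le (hrk : IsRankFunction rk) {x y : α} (h : x ≤ y) : rk x ≤ rk y := by
  rcases eq_or_lt_of_le h with rfl | hlt
  · exact le_rfl
  · exact (rp_rk_lt hrk hlt).le

lemma rowJ_PhiI {A : Finset α} (hA : IsAntichain (· ≤ ·) (↑A : Set α)) :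
    rowJ (PhiI A) = Finset.univ.filter (fun x => ∃ a ∈ A, x ≤ a) := by
  ext x
  rw [mem_rowJ]
  simp only [Finset.mem_filter, Finset.mem_univ, true_and]
  constructor
  · rintro ⟨q, hxq, hqP, hq⟩
    rw [mem_PhiI] at hqP
    push_neg at hqP
    obtain ⟨a, haA, haq⟩ := hqP
    rcases eq_or_lt_of_le haq with rfl | hlt
    · exact ⟨a, haA, hxq⟩
    · exact absurd le_rfl (mem_PhiI.1 (hq a hlt) a haA)
  · rintro ⟨a, haA, hxa⟩
    refine ⟨a, hxa, fun h => (mem_PhiI.1 h) a haA le_rfl, ?_⟩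
    intro w hw
    rw [mem_PhiI]
    intro b hbA hbw
    rcases eq_or_ne b a with rfl | hne
    · exact absurd (lt_of_le_of_lt hbw hw) (lt_irrefl _)
    · exact antichain_iff.1 hA b hbA a haA hne (le_trans hbw hw.le)

lemma PhiI_Ha (hrk : IsRankFunction rk) {A : Finset α}
    (hA : IsAntichain (· ≤ ·) (↑A : Set α)) (k : ℕ) :
    PhiI (Ha rk k A) = Gk rk k (PhiI A) := by
  ext x
  rw [mem_PhiI, mem_Gk]
  by_cases hxk : rk x < k
  · rw [if_pos hxk, mem_PhiI]
    constructor
    · intro h a haA hax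
      have hrka : rk a ≤ rk x := rp_rk_le_of_le hrk hax
      exact h a (mem_Ha.2 (Or.inl ⟨haA, by omega⟩)) hax
    · intro h a haHa hax
      rcases mem_Ha.1 haHa with ⟨haA, _⟩ | haS
      · exact h a haA hax
      · have h1 := (mem_Sset.1 (mem_minS.1 haS).1).1
        have h2 : rk a ≤ rk x := rp_rk_le_of_le hrk hax
        omega
  · rw [if_neg hxk, rowJ_PhiI hA]
    simp only [Finset.mem_filter, Finset.mem_univ, true_and]
    constructor
    · intro h
      by_contra hno
      push_neg at hno
      have hxS : x ∈ Sset rk k A := mem_Sset.2 ⟨by omega, fun y hy _ => hno y hy,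
        fun y hy hyk hyx => h y (mem_Ha.2 (Or.inl ⟨hy, hyk⟩)) hyx⟩
      obtain ⟨m, hm, hmx⟩ := rp_exists_minS_le hxS
      exact h m (mem_Ha.2 (Or.inr hm)) hmx
    · rintro ⟨a, haA, hxa⟩ b hbHa hbx
      have hra : rk x ≤ rk a := rp_rk_le_of_le hrk hxa
      rcases mem_Ha.1 hbHa with ⟨hbA, hbk⟩ | hbS
      · rcases eq_or_ne b a with rfl | hne
        · omega
        · exact antichain_iff.1 hA b hbA a haA hne (le_trans hbx hxa)
      · exact (mem_Sset.1 (mem_minS.1 hbS).1).2.1 a haA (by omega) (le_trans hbx hxa)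

lemma PhiI_inj (hrk : IsRankFunction rk) {A B : Finset α}
    (hA : IsAntichain (· ≤ ·) (↑A : Set α)) (hB : IsAntichain (· ≤ ·) (↑B : Set α))
    (h : PhiI A = PhiI B) : A = B := by
  have key : ∀ C : Finset α, IsAntichain (· ≤ ·) (↑C : Set α) → ∀ x : α,
      x ∈ C ↔ (x ∉ PhiI C ∧ ∀ y, y < x → y ∈ PhiI C) := by
    intro C hC x
    constructor
    · intro hx
      refine ⟨fun h => (mem_PhiI.1 h) x hx le_rfl, fun y hy => ?_⟩
      rw [mem_PhiI]
      intro a haC hay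
      rcases eq_or_ne a x with rfl | hne
      · exact absurd (lt_of_le_of_lt hay hy) (lt_irrefl _)
      · exact antichain_iff.1 hC a haC x hx hne (le_trans hay hy.le)
    · rintro ⟨hx, hy⟩
      rw [mem_PhiI] at hx
      push_neg at hx
      obtain ⟨a, haC, hax⟩ := hx
      rcases eq_or_lt_of_le hax with rfl | hlt
      · exact haC
      · exact absurd le_rfl (mem_PhiI.1 (hy a hlt) a haC)
  ext x
  rw [key A hA x, key B hB x, h]

lemma sigT_eq_Gk (hrk : IsRankFunction rk) {N : ℕ} (hN : ∀ x : α, rk x ≤ N)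
    {I : Finset α} (hI : IsIdealF I) :
    ∀ m k, k + m = N + 1 → sigT rk N k I = Gk rk k I := by
  intro m
  induction m with
  | zero =>
    intro k hk
    have hkn : k = N + 1 := by omega
    subst hkn
    rw [sigT_top, Gk_top hN hI]
  | succ n IH =>
    intro k hk
    have hkN : k ≤ N := by omega
    rw [sigT_unfold hkN, IH (k + 1) (by omega), Gk_step hrk hI]

lemma PhiI_block (hrk : IsRankFunction rk) {N : ℕ} (hN : ∀ x : α, rk x ≤ N)
    {A : Finset α} (hA : IsAntichain (· ≤ ·) (↑A : Set α)) {k : ℕ} (hk : k ≤ N + 1) :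
    PhiI ((List.range' k (N + 1 - k)).foldl (fun C j => rankToggle rk j C) A) =
      sigT rk N k (PhiI A) ∧
    IsAntichain (· ≤ ·)
      (↑((List.range' k (N + 1 - k)).foldl (fun C j => rankToggle rk j C) A) : Set α) := by
  have h1 : (List.range' k (N + 1 - k)).foldl (fun C j => rankToggle rk j C) A
      = Ha rk k A := by
    rw [Bp_fold hrk k hA (N + 1 - k)]
    have h2 : k + (N + 1 - k) = N + 1 := by omega
    rw [h2, Ha_eq_Bp hN]
  rw [h1]
  refine ⟨?_, Ha_antichain hrk hA⟩
  rw [PhiI_Ha hrk hA k, ← sigT_eq_Gk hrk hN (PhiI_isIdeal A) (N + 1 - k) k (by omega)]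

lemma PhiI_rvac (hrk : IsRankFunction rk) {N : ℕ} (hN : ∀ x : α, rk x ≤ N)
    {A : Finset α} (hA : IsAntichain (· ≤ ·) (↑A : Set α)) :
    PhiI (rvac rk N A) = epsT rk N 0 (PhiI A) ∧
      IsAntichain (· ≤ ·) (↑(rvac rk N A) : Set α) := by
  have main : ∀ l : List ℕ, (∀ k ∈ l, k ≤ N + 1) → ∀ B : Finset α,
      IsAntichain (· ≤ ·) (↑B : Set α) →
      PhiI (l.foldl (fun B k =>
          (List.range' k (N + 1 - k)).foldl (fun C j => rankToggle rk j C) B) B)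
        = l.foldl (fun C m => sigT rk N m C) (PhiI B) ∧
      IsAntichain (· ≤ ·) (↑(l.foldl (fun B k =>
          (List.range' k (N + 1 - k)).foldl (fun C j => rankToggle rk j C) B) B) : Set α) := by
    intro l
    induction l with
    | nil => exact fun _ B hB => ⟨rfl, hB⟩
    | cons a t IH =>
      intro hl B hB
      obtain ⟨h1, h2⟩ := PhiI_block hrk hN hB (hl a (List.mem_cons_self))
      rw [List.foldl_cons, List.foldl_cons, ← h1]
      exact IH (fun j hj => hl j (List.mem_cons_of_mem a hj)) _ h2
  have hrange : ∀ k ∈ List.range (N + 1), k ≤ N + 1 := by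
    intro k hk
    have := List.mem_range.1 hk
    omega
  obtain ⟨h1, h2⟩ := main (List.range (N + 1)) hrange A hA
  constructor
  · rw [rvac, h1, epsT]
    congr 1
    rw [List.range_eq_range']
    norm_num
  · exact h2

lemma PhiI_rowmotion (hrk : IsRankFunction rk) {N : ℕ} (hN : ∀ x : α, rk x ≤ N)
    {A : Finset α} (hA : IsAntichain (· ≤ ·) (↑A : Set α)) :
    PhiI (rowmotion A) = sigT rk N 0 (PhiI A) := by
  rw [rowmotion_eq_Ha, PhiI_Ha hrk hA 0,
    ← sigT_eq_Gk hrk hN (PhiI_isIdeal A) (N + 1) 0 (by omega)]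

end RvacProof

/-- `Rvac ∘ row = row⁻¹ ∘ Rvac`, stated equivalently (since `row` is a bijection
on antichains) as `row ∘ Rvac ∘ row = Rvac`. -/
theorem rvac_row_dihedral [Fintype α] [PartialOrder α] (rk : α → ℕ)
    (hrk : IsRankFunction rk) (A : Finset α)
    (hA : IsAntichain (· ≤ ·) (↑A : Set α)) :
    rowmotion (rvac rk (Finset.univ.sup rk) (rowmotion A)) =
      rvac rk (Finset.univ.sup rk) A := by
  set N := Finset.univ.sup rk with hNdef
  have hN : ∀ x : α, rk x ≤ N := fun x => Finset.le_sup (Finset.mem_univ x)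
  have hrow : IsAntichain (· ≤ ·) (↑(rowmotion A) : Set α) := rowmotion_antichain A
  obtain ⟨hPhiR, hRanti⟩ := PhiI_rvac hrk hN hrow
  obtain ⟨hPhiR2, hR2anti⟩ := PhiI_rvac hrk hN hA
  apply PhiI_inj hrk (rowmotion_antichain _) hR2anti
  rw [PhiI_rowmotion hrk hN hRanti, hPhiR, PhiI_rowmotion hrk hN hA, hPhiR2,
    main_alg hrk (N := N) (N + 1) 0 (by omega), sigB_sigT hrk]
end

section
/- For any finite ranked poset P and any antichain A of P, the composition row^{-1} ∘ Rvac preserves support: supp((row^{-1} ∘ Rvac)(A)) = supp(A), where supp(A) is the set of minimal elements of P lying below some element of A. -/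
open scoped Classical

variable {α : Type*}

section AuxLemmas

variable [PartialOrder α]

lemma mem_toggle_of_ne {p q : α} {A : Finset α} (h : p ≠ q) :
    p ∈ toggle q A ↔ p ∈ A := by
  unfold toggle
  split_ifs with h1 h2
  · simp [Finset.mem_erase, h]
  · simp [Finset.mem_insert, h]
  · rfl

lemma toggle_antichain {q : α} {A : Finset α}
    (hA : IsAntichain (· ≤ ·) (A : Set α)) :
    IsAntichain (· ≤ ·) (toggle q A : Set α) := by
  unfold toggle
  split_ifs with h1 h2
  · exact hA.subset (Finset.coe_subset.mpr (Finset.erase_subset _ _))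
  · exact h2
  · exact hA

lemma foldr_toggle_antichain {L : List α} {A : Finset α}
    (hA : IsAntichain (· ≤ ·) (A : Set α)) :
    IsAntichain (· ≤ ·) (↑(L.foldr toggle A) : Set α) := by
  induction L with
  | nil => exact hA
  | cons q L ih => exact toggle_antichain ih

lemma mem_foldr_toggle_of_not_mem {p : α} {L : List α} {A : Finset α} (h : p ∉ L) :
    p ∈ L.foldr toggle A ↔ p ∈ A := by
  induction L with
  | nil => rfl
  | cons q L ih =>
    simp only [List.foldr_cons]
    have hpq : p ≠ q := by rintro rfl; exact h (List.mem_cons_self)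
    rw [mem_toggle_of_ne hpq]
    exact ih (fun hp => h (List.mem_cons_of_mem _ hp))

lemma foldr_toggle_subset (L : List α) (A : Finset α) :
    L.foldr toggle A ⊆ A ∪ L.toFinset := by
  induction L with
  | nil => simp
  | cons q L ih =>
    intro x hx
    simp only [List.foldr_cons] at hx
    have hx' : x ∈ insert q (L.foldr toggle A) := by
      unfold toggle at hx
      split_ifs at hx with h1 h2
      · exact Finset.mem_insert_of_mem (Finset.erase_subset _ _ hx)
      · exact hx
      · exact Finset.mem_insert_of_mem hx
    rcases Finset.mem_insert.mp hx' with rfl | hxS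
    · simp
    · have := ih hxS
      rcases Finset.mem_union.mp this with h | h
      · exact Finset.mem_union_left _ h
      · refine Finset.mem_union_right _ ?_
        simp only [List.toFinset_cons, Finset.mem_insert]
        exact Or.inr h

lemma mem_foldr_toggle_zero {rk : α → ℕ}
    (hmin : ∀ x : α, rk x = 0 → ∀ q : α, ¬ q < x)
    {L : List α} {A : Finset α} (hA : IsAntichain (· ≤ ·) (A : Set α))
    {p : α} (hnd : L.Nodup) (hL0 : ∀ x ∈ L, rk x = 0) (hp : p ∈ L) :
    p ∈ L.foldr toggle A ↔ ¬ ∃ a ∈ A, p ≤ a := by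
  induction L with
  | nil => cases hp
  | cons q L ih =>
    simp only [List.foldr_cons]
    rcases List.mem_cons.mp hp with rfl | hpL
    · -- p = q : p is toggled now
      have hpL' : p ∉ L := (List.nodup_cons.mp hnd).1
      have hpS : p ∈ L.foldr toggle A ↔ p ∈ A := mem_foldr_toggle_of_not_mem hpL'
      have hp0 : rk p = 0 := hL0 p (List.mem_cons_self)
      have hpmin := hmin p hp0
      set S := L.foldr toggle A with hS
      by_cases hpA : p ∈ A
      · -- p gets erased
        have hpSm : p ∈ S := hpS.mpr hpA
        unfold toggle
        rw [if_pos hpSm]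
        exact iff_of_false (fun h => (Finset.mem_erase.mp h).1 rfl)
          (not_not_intro ⟨p, hpA, le_rfl⟩)
      · have hpS' : p ∉ S := fun h => hpA (hpS.mp h)
        by_cases hex : ∃ a ∈ A, p ≤ a
        · -- cannot insert p
          obtain ⟨a, haA, hpa⟩ := hex
          have hne : p ≠ a := fun h => hpA (h ▸ haA)
          have ha0 : rk a ≠ 0 := fun h0 => hmin a h0 p (lt_of_le_of_ne hpa hne)
          have haL : a ∉ L := fun h => ha0 (hL0 a (List.mem_cons_of_mem _ h))
          have haS : a ∈ S := (mem_foldr_toggle_of_not_mem haL).mpr haA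
          have hnotanti : ¬ IsAntichain (· ≤ ·) (↑(insert p S) : Set α) := by
            intro h
            exact h (Finset.mem_coe.mpr (Finset.mem_insert_self p S))
              (Finset.mem_coe.mpr (Finset.mem_insert_of_mem haS)) hne hpa
          unfold toggle
          rw [if_neg hpS', if_neg hnotanti]
          exact iff_of_false hpS' (not_not_intro ⟨a, haA, hpa⟩)
        · -- p gets inserted
          have hSanti : IsAntichain (· ≤ ·) (S : Set α) := foldr_toggle_antichain hA
          have hanti : IsAntichain (· ≤ ·) (↑(insert p S) : Set α) := by
            intro x hx y hy hxy
            simp only [Finset.coe_insert, Set.mem_insert_iff, Finset.mem_coe] at hx hy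
            rcases hx with rfl | hxS
            · rcases hy with rfl | hyS
              · exact absurd rfl hxy
              · intro hle
                have hyAL : y ∈ A ∪ L.toFinset := foldr_toggle_subset L A hyS
                rcases Finset.mem_union.mp hyAL with hyA | hyL
                · exact hex ⟨y, hyA, hle⟩
                · have hy0 : rk y = 0 :=
                    hL0 y (List.mem_cons_of_mem _ (List.mem_toFinset.mp hyL))
                  exact hmin y hy0 x (lt_of_le_of_ne hle hxy)
            · rcases hy with rfl | hyS
              · intro hle
                exact hpmin x (lt_of_le_of_ne hle hxy)
              · exact hSanti hxS hyS hxy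
          unfold toggle
          rw [if_neg hpS', if_pos hanti]
          exact iff_of_true (Finset.mem_insert_self p S) hex
    · -- p ≠ q : toggle of q doesn't affect p
      have hq : p ≠ q := by
        rintro rfl
        exact (List.nodup_cons.mp hnd).1 hpL
      rw [mem_toggle_of_ne hq]
      exact ih (List.nodup_cons.mp hnd).2
        (fun x hx => hL0 x (List.mem_cons_of_mem _ hx)) hpL

lemma mem_rankToggle_of_ne [Fintype α] {rk : α → ℕ} {i : ℕ} {p : α} (h : rk p ≠ i)
    (A : Finset α) : p ∈ rankToggle rk i A ↔ p ∈ A := by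
  apply mem_foldr_toggle_of_not_mem
  intro hmem
  exact h (Finset.mem_filter.mp (Finset.mem_toList.mp hmem)).2

lemma mem_rankToggle_zero [Fintype α] {rk : α → ℕ}
    (hmin : ∀ x : α, rk x = 0 → ∀ q : α, ¬ q < x)
    {A : Finset α} (hA : IsAntichain (· ≤ ·) (A : Set α))
    {p : α} (hp : rk p = 0) :
    p ∈ rankToggle rk 0 A ↔ ¬ ∃ a ∈ A, p ≤ a := by
  apply mem_foldr_toggle_zero hmin hA (Finset.nodup_toList _)
    (fun x hx => (Finset.mem_filter.mp (Finset.mem_toList.mp hx)).2)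
  exact Finset.mem_toList.mpr (Finset.mem_filter.mpr ⟨Finset.mem_univ _, hp⟩)

lemma mem_foldl_rankToggle [Fintype α] {rk : α → ℕ} {p : α} (hp : rk p = 0) :
    ∀ (l : List ℕ) (B : Finset α), (∀ j ∈ l, j ≠ 0) →
      (p ∈ l.foldl (fun C j => rankToggle rk j C) B ↔ p ∈ B) := by
  intro l
  induction l with
  | nil => intro B _; exact Iff.rfl
  | cons j l ih =>
    intro B hl
    simp only [List.foldl_cons]
    rw [ih _ (fun k hk => hl k (List.mem_cons_of_mem _ hk))]
    exact mem_rankToggle_of_ne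
      (fun h => hl j (List.mem_cons_self) (by rw [← h]; exact hp)) B

lemma mem_foldl_blocks [Fintype α] {rk : α → ℕ} {p : α} (hp : rk p = 0) (N : ℕ) :
    ∀ (l : List ℕ) (B : Finset α), (∀ k ∈ l, k ≠ 0) →
      (p ∈ l.foldl
          (fun B k => (List.range' k (N + 1 - k)).foldl (fun C j => rankToggle rk j C) B) B
        ↔ p ∈ B) := by
  intro l
  induction l with
  | nil => intro B _; exact Iff.rfl
  | cons k l ih =>
    intro B hl
    simp only [List.foldl_cons]
    rw [ih _ (fun m hm => hl m (List.mem_cons_of_mem _ hm))]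
    apply mem_foldl_rankToggle hp
    intro j hj
    have hkj : k ≤ j := (List.mem_range'_1.mp hj).1
    have hk0 : k ≠ 0 := hl k (List.mem_cons_self)
    omega

lemma mem_rvac_zero [Fintype α] {rk : α → ℕ}
    (hmin : ∀ x : α, rk x = 0 → ∀ q : α, ¬ q < x)
    {A : Finset α} (hA : IsAntichain (· ≤ ·) (A : Set α))
    {p : α} (hp : rk p = 0) (N : ℕ) :
    p ∈ rvac rk N A ↔ ¬ ∃ a ∈ A, p ≤ a := by
  unfold rvac
  rw [List.range_succ_eq_map]
  simp only [List.foldl_cons]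
  rw [mem_foldl_blocks hp N _ _ (by
    intro k hk
    rcases List.mem_map.mp hk with ⟨m, _, rfl⟩
    exact Nat.succ_ne_zero m)]
  have h1 : List.range' 0 (N + 1 - 0) = 0 :: List.range' 1 N := by
    have : N + 1 - 0 = N + 1 := rfl
    rw [this, List.range'_succ]
  rw [h1]
  simp only [List.foldl_cons]
  rw [mem_foldl_rankToggle hp _ _ (by
    intro j hj
    have : 1 ≤ j := (List.mem_range'_1.mp hj).1
    omega)]
  exact mem_rankToggle_zero hmin hA hp

lemma mem_rowmotion_iff [Fintype α] {B : Finset α} {p : α}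
    (hpmin : ∀ q : α, ¬ q < p) :
    p ∈ rowmotion B ↔ ¬ ∃ a ∈ B, p ≤ a := by
  constructor
  · intro h
    rintro ⟨a, ha, hpa⟩
    exact (Finset.mem_filter.mp h).2.1 a ha hpa
  · intro hex
    refine Finset.mem_filter.mpr ⟨Finset.mem_univ _,
      ⟨fun y hy hle => hex ⟨y, hy, hle⟩, fun z _ hz => ?_⟩⟩
    rcases lt_or_eq_of_le hz with h | h
    · exact absurd h (hpmin z)
    · exact h

end AuxLemmas

/-- `supp((row⁻¹ ∘ Rvac)(A)) = supp(A)`: if `B` is the antichain with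
`row(B) = Rvac(A)`, then `supp B = supp A`. -/
theorem rvac_row_inv_supp [Fintype α] [PartialOrder α] (rk : α → ℕ)
    (hrk : IsRankFunction rk) (A B : Finset α)
    (hA : IsAntichain (· ≤ ·) (↑A : Set α))
    (hB : IsAntichain (· ≤ ·) (↑B : Set α))
    (hrow : rowmotion B = rvac rk (Finset.univ.sup rk) A) :
    {p : α | (∀ q : α, ¬ q < p) ∧ ∃ a ∈ B, p ≤ a} =
      {p : α | (∀ q : α, ¬ q < p) ∧ ∃ a ∈ A, p ≤ a} := by
  have hmin0 : ∀ x : α, rk x = 0 → ∀ q : α, ¬ q < x := by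
    intro x hx q hq
    obtain ⟨m, hm, hmax⟩ := Finset.exists_maximal (s := Finset.univ.filter (· < x))
      ⟨q, Finset.mem_filter.mpr ⟨Finset.mem_univ _, hq⟩⟩
    have hm' : m < x := (Finset.mem_filter.mp hm).2
    have hcov : m ⋖ x :=
      ⟨hm', fun c h1 h2 => not_le_of_gt h1 (hmax (Finset.mem_filter.mpr ⟨Finset.mem_univ _, h2⟩) h1.le)⟩
    have := hrk.2 m x hcov
    omega
  have key : ∀ p : α, (∀ q : α, ¬ q < p) →
      ((∃ a ∈ B, p ≤ a) ↔ (∃ a ∈ A, p ≤ a)) := by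
    intro p hpm
    have hp0 : rk p = 0 := hrk.1 p hpm
    have h1 := mem_rowmotion_iff (B := B) hpm
    have h2 := mem_rvac_zero hmin0 hA hp0 (Finset.univ.sup rk)
    rw [hrow, h2] at h1
    constructor
    · intro hex
      by_contra hne
      exact (h1.mp hne) hex
    · intro hex
      by_contra hne
      exact (h1.mpr hne) hex
  ext p
  simp only [Set.mem_setOf_eq]
  constructor
  · rintro ⟨hpm, hex⟩
    exact ⟨hpm, (key p hpm).mp hex⟩
  · rintro ⟨hpm, hex⟩
    exact ⟨hpm, (key p hpm).mpr hex⟩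
end
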